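/- Combining the previous two facts: for a scalar system with rate R = log(1 + SINR) where SINR = |h·w̄|²/(I + σ²), one has R = −log(e_mmse) where e_mmse = min_u e(u) = 1/(1 + SINR); hence log(1 + SINR) = min over (u, ρ>0) of (ρ·e(u) − log ρ) subtracted from 1, i.e. log(1+SINR) = 1 − min_{u,ρ>0}(ρ·e(u) − log ρ). -/

import Mathlib

lemma wmmse_key_id (a : ℂ) (N : ℝ) (u : ℂ) :
    (‖a‖ ^ 2 + N) * (‖1 - (starRingEnd ℂ) u * a‖ ^ 2 + ‖u‖ ^ 2 * N) - N
      = Complex.normSq (((‖a‖ ^ 2 + N : ℝ) : ℂ) * u - a) := by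
  simp only [Complex.sq_norm, Complex.normSq_apply, Complex.sub_re, Complex.sub_im,
    Complex.mul_re, Complex.mul_im, Complex.one_re, Complex.one_im,
    Complex.ofReal_re, Complex.ofReal_im, Complex.conj_re, Complex.conj_im]
  ring



/-- Scalar WMMSE rate–MSE equivalence: with e(u) = |1 − ū·h̄·w|² + |u|²·(I + σ²),
SINR = |h·w̄|²/(I + σ²) and e_mmse = min_u e(u) = 1/(1 + SINR), one has
log(1 + SINR) = −log e_mmse = 1 − min_{u,ρ>0}(ρ·e(u) − log ρ). -/
theorem stmt_10 (h w : ℂ) (I σsq : ℝ) (hI : 0 ≤ I) (hσ : 0 < σsq)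
    (e : ℂ → ℝ)
    (he : ∀ u, e u = ‖1 - (starRingEnd ℂ) u * (starRingEnd ℂ) h * w‖ ^ 2
        + ‖u‖ ^ 2 * (I + σsq))
    (SINR : ℝ) (hSINR : SINR = (‖h * (starRingEnd ℂ) w‖) ^ 2 / (I + σsq))
    (emmse : ℝ) (hmm : IsLeast {x : ℝ | ∃ u : ℂ, x = e u} emmse) :
    emmse = 1 / (1 + SINR) ∧
    Real.log (1 + SINR) = - Real.log emmse ∧
    Real.log (1 + SINR) =
      1 - sInf {x : ℝ | ∃ (u : ℂ) (ρ : ℝ), 0 < ρ ∧ x = ρ * e u - Real.log ρ} := by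
  set N := I + σsq with hNdef
  have hN : 0 < N := by positivity
  set a : ℂ := (starRingEnd ℂ) h * w with hadef
  have he' : ∀ u, e u = ‖1 - (starRingEnd ℂ) u * a‖ ^ 2 + ‖u‖ ^ 2 * N := by
    intro u; rw [he u, mul_assoc]
  set S : ℝ := ‖a‖ ^ 2 + N with hSdef
  have hS : 0 < S := by positivity
  -- lower bound for e
  have hlow : ∀ u : ℂ, N / S ≤ e u := by
    intro u
    have hk := wmmse_key_id a N u
    have hnn : 0 ≤ Complex.normSq (((S : ℝ) : ℂ) * u - a) := Complex.normSq_nonneg _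
    rw [← hk] at hnn
    rw [he' u]
    rw [div_le_iff₀ hS]
    nlinarith [hnn]
  -- value at minimizer
  have hSne : ((S : ℝ) : ℂ) ≠ 0 := Complex.ofReal_ne_zero.mpr (ne_of_gt hS)
  have hstar : e (a / ((S : ℝ) : ℂ)) = N / S := by
    have hk := wmmse_key_id a N (a / ((S : ℝ) : ℂ))
    rw [← hSdef] at hk
    have hz : ((S : ℝ) : ℂ) * (a / ((S : ℝ) : ℂ)) - a = 0 := by
      rw [mul_comm, div_mul_cancel₀ a hSne, sub_self]
    rw [hz, map_zero] at hk
    rw [he' _, eq_div_iff (ne_of_gt hS)]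
    linarith
  -- emmse = N / S
  have hem : emmse = N / S := by
    have h1 : emmse ≤ N / S := by
      have := hmm.2 ⟨a / ((S : ℝ) : ℂ), hstar.symm⟩
      linarith
    obtain ⟨u0, hu0⟩ := hmm.1
    have h2 : N / S ≤ emmse := hu0 ▸ hlow u0
    linarith
  have habs : ‖h * (starRingEnd ℂ) w‖ = ‖a‖ := by
    simp [hadef, map_mul, Complex.norm_conj, mul_comm]
  have hSINR' : 1 + SINR = S / N := by
    rw [hSINR, habs, hSdef]
    field_simp
    ring
  have hempos : 0 < emmse := by rw [hem]; positivity
  have g1 : emmse = 1 / (1 + SINR) := by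
    rw [hSINR', hem, one_div_div]
  have g2 : Real.log (1 + SINR) = - Real.log emmse := by
    rw [g1, one_div, Real.log_inv, neg_neg]
  refine ⟨g1, g2, ?_⟩
  -- third claim
  have hmem : (1 + Real.log emmse) ∈
      {x : ℝ | ∃ (u : ℂ) (ρ : ℝ), 0 < ρ ∧ x = ρ * e u - Real.log ρ} := by
    refine ⟨a / ((S : ℝ) : ℂ), 1 / emmse, by positivity, ?_⟩
    rw [hstar, ← hem, one_div, Real.log_inv]
    field_simp
    ring
  have hlb : ∀ x ∈ {x : ℝ | ∃ (u : ℂ) (ρ : ℝ), 0 < ρ ∧ x = ρ * e u - Real.log ρ},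
      1 + Real.log emmse ≤ x := by
    rintro x ⟨u, ρ, hρ, rfl⟩
    have h1 : emmse ≤ e u := hmm.2 ⟨u, rfl⟩
    have h2 : ρ * emmse ≤ ρ * e u := by nlinarith
    have h3 : Real.log (ρ * emmse) ≤ ρ * emmse - 1 :=
      Real.log_le_sub_one_of_pos (by positivity)
    rw [Real.log_mul (ne_of_gt hρ) (ne_of_gt hempos)] at h3
    linarith
  have hinf : sInf {x : ℝ | ∃ (u : ℂ) (ρ : ℝ), 0 < ρ ∧ x = ρ * e u - Real.log ρ}
      = 1 + Real.log emmse :=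
    le_antisymm (csInf_le ⟨1 + Real.log emmse, hlb⟩ hmem) (le_csInf ⟨_, hmem⟩ hlb)
  rw [hinf, g2]
  ring
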